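/- Let n ≥ 1 and let Γ: ℝ → ℝ^{n+1} be a C^∞ curve such that det(Γ(x), Γ'(x), …, Γ^{(n)}(x)) = 1 for all x ∈ ℝ. Then for every x, the vector Γ^{(n+1)}(x) lies in the linear span of Γ(x), Γ'(x), …, Γ^{(n−1)}(x); consequently there exist smooth functions k_0, …, k_{n−1}: ℝ → ℝ such that Γ^{(n+1)} + k_{n−1}Γ^{(n−1)} + ⋯ + k_1Γ' + k_0Γ = 0. -/

import Mathlib

open Matrix

lemma det_norm_bound (N : ℕ) (m : Fin N → Fin N → ℝ) :
    ‖(Matrix.of m).det‖ ≤ (Nat.factorial N : ℝ) * ∏ i, ‖m i‖ := by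
  rw [Matrix.det_apply]
  refine (norm_sum_le _ _).trans ?_
  have h : ∀ σ : Equiv.Perm (Fin N),
      ‖Equiv.Perm.sign σ • ∏ i, Matrix.of m (σ i) i‖ ≤ ∏ i, ‖m i‖ := by
    intro σ
    have h1 : ‖Equiv.Perm.sign σ • ∏ i, Matrix.of m (σ i) i‖ = ‖∏ i, m (σ i) i‖ := by
      rcases Int.units_eq_one_or (Equiv.Perm.sign σ) with h | h <;>
        simp [h, Units.smul_def]
    rw [h1]
    calc ‖∏ i, m (σ i) i‖ = ∏ i, ‖m (σ i) i‖ := by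
          simp [Real.norm_eq_abs, Finset.abs_prod]
      _ ≤ ∏ i, ‖m (σ i)‖ := Finset.prod_le_prod (fun i _ => norm_nonneg _)
          (fun i _ => norm_le_pi_norm _ _)
      _ = ∏ i, ‖m i‖ := Equiv.prod_comp σ (fun i => ‖m i‖)
  refine (Finset.sum_le_sum (fun σ _ => h σ)).trans_eq ?_
  rw [Finset.sum_const, Finset.card_univ, Fintype.card_perm, Fintype.card_fin, nsmul_eq_mul]

noncomputable def detCMap (N : ℕ) :
    ContinuousMultilinearMap ℝ (fun _ : Fin N => (Fin N → ℝ)) ℝ :=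
  MultilinearMap.mkContinuous
    (Matrix.detRowAlternating (n := Fin N) (R := ℝ)).toMultilinearMap
    (Nat.factorial N) (fun m => det_norm_bound N m)

lemma detCMap_apply (N : ℕ) (m : Fin N → Fin N → ℝ) :
    detCMap N m = (Matrix.of m).det := rfl


/-- Let `n ≥ 1` and let `Γ : ℝ → ℝ^{n+1}` be a `C^∞` curve with
`det(Γ, Γ', …, Γ^{(n)}) = 1` everywhere.  Then `Γ^{(n+1)}(x)` always lies in the span of
`Γ(x), Γ'(x), …, Γ^{(n-1)}(x)`, and consequently there are smooth functions
`k_0, …, k_{n-1} : ℝ → ℝ` (the Wilczynski invariants) with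
`Γ^{(n+1)} + k_{n-1}Γ^{(n-1)} + ⋯ + k_1Γ' + k_0Γ = 0`. -/
theorem stmt_11 (n : ℕ) (hn : 1 ≤ n) (Γ : ℝ → Fin (n + 1) → ℝ)
    (hΓ : ContDiff ℝ (⊤ : ℕ∞) Γ)
    (hdet : ∀ x : ℝ, (Matrix.of fun i j : Fin (n + 1) => iteratedDeriv (j : ℕ) Γ x i).det = 1) :
    (∀ x : ℝ, iteratedDeriv (n + 1) Γ x ∈
        Submodule.span ℝ (Set.range fun i : Fin n => iteratedDeriv (i : ℕ) Γ x)) ∧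
    ∃ k : Fin n → ℝ → ℝ, (∀ i, ContDiff ℝ (⊤ : ℕ∞) (k i)) ∧
      ∀ x : ℝ, iteratedDeriv (n + 1) Γ x
          + ∑ i : Fin n, k i x • iteratedDeriv (i : ℕ) Γ x = 0 := by
  classical
  have hI : ∀ j : ℕ, ContDiff ℝ (⊤ : ℕ∞) (iteratedDeriv j Γ) := by
    intro j
    rw [iteratedDeriv_eq_iterate]
    exact hΓ.iterate_deriv j
  have hD : ∀ (j : ℕ) (x : ℝ), HasDerivAt (iteratedDeriv j Γ) (iteratedDeriv (j + 1) Γ x) x := by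
    intro j x
    rw [iteratedDeriv_succ]
    exact (((hI j).differentiable (by simp)) x).hasDerivAt
  set g : ℝ → Fin (n + 1) → Fin (n + 1) → ℝ := fun x j => iteratedDeriv (j : ℕ) Γ x with hg
  have key : ∀ x : ℝ,
      (Matrix.of (Function.update (g x) (Fin.last n) (iteratedDeriv (n + 1) Γ x))).det = 0 := by
    intro x
    have hgd : HasDerivAt g (fun j : Fin (n + 1) => iteratedDeriv ((j : ℕ) + 1) Γ x) x :=
      hasDerivAt_pi.2 fun j => hD j x
    have h1 : HasDerivAt (fun y => detCMap (n + 1) (g y))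
        ((detCMap (n + 1)).linearDeriv (g x)
          (fun j : Fin (n + 1) => iteratedDeriv ((j : ℕ) + 1) Γ x)) x :=
      ((detCMap (n + 1)).hasFDerivAt (g x)).comp_hasDerivAt x hgd
    have hconst : (fun y => detCMap (n + 1) (g y)) = fun _ => (1 : ℝ) := by
      funext y
      rw [detCMap_apply]
      have h2 : (Matrix.of (g y))
          = (Matrix.of fun i j : Fin (n + 1) => iteratedDeriv (j : ℕ) Γ y i)ᵀ := by
        ext i j; rfl
      rw [h2, Matrix.det_transpose, hdet y]
    rw [hconst] at h1
    have h0 := (hasDerivAt_const x (1 : ℝ)).unique h1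
    have hsum : ∑ j : Fin (n + 1),
        detCMap (n + 1) (Function.update (g x) j (iteratedDeriv ((j : ℕ) + 1) Γ x)) = 0 := by
      rw [← (detCMap (n + 1)).linearDeriv_apply, ← h0]
    have hz : ∀ i : Fin n,
        detCMap (n + 1) (Function.update (g x) i.castSucc
          (iteratedDeriv ((i.castSucc : ℕ) + 1) Γ x)) = 0 := by
      intro i
      have hne : i.castSucc ≠ i.succ := by
        simp [Fin.ext_iff]
      have heq : Function.update (g x) i.castSucc
            (iteratedDeriv ((i.castSucc : ℕ) + 1) Γ x) i.castSucc
          = Function.update (g x) i.castSucc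
            (iteratedDeriv ((i.castSucc : ℕ) + 1) Γ x) i.succ := by
        rw [Function.update_self, Function.update_of_ne hne.symm]
        simp [hg]
      exact Matrix.detRowAlternating.map_eq_zero_of_eq _ heq hne
    rw [Fin.sum_univ_castSucc] at hsum
    have : detCMap (n + 1) (Function.update (g x) (Fin.last n)
        (iteratedDeriv (((Fin.last n : Fin (n + 1)) : ℕ) + 1) Γ x)) = 0 := by
      rw [Finset.sum_congr rfl (fun i _ => hz i)] at hsum
      simpa using hsum
    simpa [Fin.val_last, detCMap_apply] using this
  set M : ℝ → Matrix (Fin (n + 1)) (Fin (n + 1)) ℝ :=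
    fun x => Matrix.of fun i j : Fin (n + 1) => iteratedDeriv (j : ℕ) Γ x i with hM
  set c : ℝ → Fin (n + 1) → ℝ :=
    fun x => Matrix.cramer (M x) (iteratedDeriv (n + 1) Γ x) with hc
  have hclast : ∀ x, c x (Fin.last n) = 0 := by
    intro x
    show ((M x).cramer (iteratedDeriv (n + 1) Γ x)) (Fin.last n) = 0
    rw [Matrix.cramer_apply]
    have h2 : (M x).updateCol (Fin.last n) (iteratedDeriv (n + 1) Γ x)
        = (Matrix.of (Function.update (g x) (Fin.last n) (iteratedDeriv (n + 1) Γ x)))ᵀ := by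
      ext i j
      simp only [Matrix.updateCol_apply, Matrix.transpose_apply, Matrix.of_apply,
        Function.update_apply, hM, hg]
      by_cases h : j = Fin.last n <;> simp [h]
    rw [h2, Matrix.det_transpose, key x]
  have hrep : ∀ x, iteratedDeriv (n + 1) Γ x
      = ∑ j : Fin (n + 1), c x j • iteratedDeriv (j : ℕ) Γ x := by
    intro x
    have h1 : M x *ᵥ c x = iteratedDeriv (n + 1) Γ x := by
      rw [hc, Matrix.mulVec_cramer, hdet x, one_smul]
    funext i
    rw [← h1]
    simp [Matrix.mulVec, dotProduct, Finset.sum_apply, hM, mul_comm]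
  have hrep' : ∀ x, iteratedDeriv (n + 1) Γ x
      = ∑ i : Fin n, c x i.castSucc • iteratedDeriv (i : ℕ) Γ x := by
    intro x
    rw [hrep x, Fin.sum_univ_castSucc, hclast x, zero_smul, add_zero]
    rfl
  refine ⟨?_, ?_⟩
  · intro x
    rw [hrep' x]
    exact Submodule.sum_mem _ fun i _ => Submodule.smul_mem _ _
      (Submodule.subset_span ⟨i, rfl⟩)
  · refine ⟨fun i x => -c x i.castSucc, ?_, ?_⟩
    · intro i
      have hentry : ∀ r q : Fin (n + 1),
          ContDiff ℝ (⊤ : ℕ∞) (fun x =>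
            ((M x).updateCol i.castSucc (iteratedDeriv (n + 1) Γ x)) r q) := by
        intro r q
        by_cases h : q = i.castSucc
        · subst h
          simp only [Matrix.updateCol_apply, if_pos rfl]
          exact (contDiff_pi.mp (hI (n + 1))) r
        · simp only [Matrix.updateCol_apply, if_neg h]
          exact (contDiff_pi.mp (hI q)) r
      have hcs : (fun x => c x i.castSucc)
          = fun x => ∑ σ : Equiv.Perm (Fin (n + 1)), (Equiv.Perm.sign σ : ℝ) *
              ∏ r, ((M x).updateCol i.castSucc (iteratedDeriv (n + 1) Γ x)) (σ r) r := by
        funext x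
        show ((M x).cramer (iteratedDeriv (n + 1) Γ x)) i.castSucc = _
        rw [Matrix.cramer_apply, Matrix.det_apply']
      have : ContDiff ℝ (⊤ : ℕ∞) (fun x => c x i.castSucc) := by
        rw [hcs]
        exact ContDiff.sum fun σ _ => contDiff_const.mul (contDiff_prod fun r _ => hentry (σ r) r)
      exact this.neg
    · intro x
      rw [hrep' x, ← Finset.sum_add_distrib]
      simp
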